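/- In a conditionally connected dcpo P, if B is a weak basis and x ∈ P has a nontrivial directed set in P (a directed A ⊆ P∖{x} with ⊔A = x), then x has a nontrivial directed set contained in B (a directed B_x ⊆ B∖{x} with ⊔B_x = x). -/
import Mathlib


/-- In a conditionally connected dcpo with weak basis `B`, any element with a
nontrivial directed set in `P` has a nontrivial directed set contained in `B`. -/
theorem nontrivial_directed_set_in_weak_basis {P : Type*} [PartialOrder P]
    (hdcpo : ∀ A : Set P, A.Nonempty → DirectedOn (· ≤ ·) A → ∃ a, IsLUB A a)
    (hcc : ∀ x y z : P, x ≤ z → y ≤ z → x ≤ y ∨ y ≤ x)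
    (B : Set P)
    (hweak : ∀ x : P, ∃ Bx ⊆ B, Bx.Nonempty ∧ DirectedOn (· ≤ ·) Bx ∧ IsLUB Bx x)
    (x : P) (A : Set P) (hAx : x ∉ A) (hAne : A.Nonempty)
    (hAdir : DirectedOn (· ≤ ·) A) (hAsup : IsLUB A x) :
    ∃ Bx ⊆ B, x ∉ Bx ∧ Bx.Nonempty ∧ DirectedOn (· ≤ ·) Bx ∧ IsLUB Bx x := by
  choose Ba hBaB hBane _hBadir hBalub using hweak
  set C : Set P := ⋃ a ∈ A, Ba a with hC
  -- every element of C is ≤ some a ∈ A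
  have hmem : ∀ c ∈ C, ∃ a ∈ A, c ≤ a := by
    intro c hc
    simp only [hC, Set.mem_iUnion] at hc
    obtain ⟨a, ha, hca⟩ := hc
    exact ⟨a, ha, (hBalub a).1 hca⟩
  have hub : ∀ c ∈ C, c ≤ x := by
    intro c hc
    obtain ⟨a, ha, hca⟩ := hmem c hc
    exact hca.trans (hAsup.1 ha)
  refine ⟨C, ?_, ?_, ?_, ?_, ?_⟩
  · intro c hc
    simp only [hC, Set.mem_iUnion] at hc
    obtain ⟨a, _, hca⟩ := hc
    exact hBaB a hca
  · intro hxC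
    obtain ⟨a, ha, hxa⟩ := hmem x hxC
    exact hAx (le_antisymm hxa (hAsup.1 ha) ▸ ha)
  · obtain ⟨a, ha⟩ := hAne
    obtain ⟨b, hb⟩ := hBane a
    exact ⟨b, Set.mem_biUnion ha hb⟩
  · intro c hc d hd
    rcases hcc c d x (hub c hc) (hub d hd) with h | h
    · exact ⟨d, hd, h, le_refl d⟩
    · exact ⟨c, hc, le_refl c, h⟩
  · constructor
    · exact hub
    · intro u hu
      refine hAsup.2 ?_
      intro a ha
      refine (hBalub a).2 ?_
      intro b hb
      exact hu (Set.mem_biUnion ha hb)
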